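/- arXiv:1907.12731 — 4 statements merged into one kernel-verified Lean document; each statement's English description precedes it below -/
import Mathlib

section
/- More generally, for a rank two Drinfeld module φ and any nonzero polynomial C ∈ F_q[x] of degree k, the skew polynomial φ(C) has degree exactly 2k, and its leading coefficient is c_k · Δ^{(q^{2k}-1)/(q²-1)} where c_k is the leading coefficient of C. -/
/-- An abstract model of the skew polynomial ring `L⟨τ⟩` with the commutation rule
`τ u = u ^ q τ`: a ring `S` with a coefficient embedding `C : L →+* S`, a
distinguished element `tau`, and a coefficient function giving, for every element
of `S`, its (unique, by `indep`) representation as `∑ C (u_i) * tau ^ i`. -/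
structure SkewPolyRing (q : ℕ) (L : Type*) [Field L] (S : Type*) [Ring S] where
  C : L →+* S
  tau : S
  tau_comm : ∀ u : L, tau * C u = C (u ^ q) * tau
  coeff : S → (ℕ →₀ L)
  sum_coeff : ∀ U : S, ((coeff U).sum fun i a => C a * tau ^ i) = U
  indep : ∀ f : ℕ →₀ L, ((f.sum fun i a => C a * tau ^ i) = 0) → f = 0

namespace SkewPolyRing

variable {q : ℕ} {L S : Type*} [Field L] [Ring S]

/-- The degree of a skew polynomial (`⊥` for `0`). -/
noncomputable def degree (P : SkewPolyRing q L S) (U : S) : WithBot ℕ :=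
  (P.coeff U).support.max

end SkewPolyRing

namespace SkewPolyRing

variable {q : ℕ} {L S : Type*} [Field L] [Ring S] (P : SkewPolyRing q L S)

lemma coeff_unique (f : ℕ →₀ L) :
    P.coeff (f.sum fun i a => P.C a * P.tau ^ i) = f := by
  set U := f.sum fun i a => P.C a * P.tau ^ i with hU
  have h0 : ((P.coeff U - f).sum fun i a => P.C a * P.tau ^ i) = 0 := by
    rw [Finsupp.sum_sub_index (fun i a b => by rw [map_sub, sub_mul]),
      P.sum_coeff U, ← hU, sub_self]
  have := P.indep _ h0
  exact sub_eq_zero.mp this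

lemma coeff_add (U V : S) : P.coeff (U + V) = P.coeff U + P.coeff V := by
  conv_lhs => rw [← P.sum_coeff U, ← P.sum_coeff V]
  rw [← Finsupp.sum_add_index' (fun i => by simp) (fun i a b => by rw [map_add, add_mul])]
  exact P.coeff_unique _

lemma coeff_C (u : L) : P.coeff (P.C u) = Finsupp.single 0 u := by
  have := P.coeff_unique (Finsupp.single 0 u)
  rwa [Finsupp.sum_single_index (by simp), pow_zero, mul_one] at this

lemma tau_pow_comm (u : L) (n : ℕ) :
    P.tau ^ n * P.C u = P.C (u ^ q ^ n) * P.tau ^ n := by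
  induction n generalizing u with
  | zero => simp
  | succ n ih =>
    rw [pow_succ, mul_assoc, P.tau_comm, ← mul_assoc, ih (u ^ q), mul_assoc, ← pow_succ,
      ← pow_mul, ← pow_succ']

lemma coeff_phiX_mul (hq0 : q ≠ 0) (c g Δ : L) (U : S) :
    P.coeff ((P.C c + P.C g * P.tau + P.C Δ * P.tau ^ 2) * U) =
      (P.coeff U).mapRange (fun v => c * v) (by simp)
      + ((P.coeff U).mapRange (fun v => g * v ^ q) (by simp [zero_pow hq0])).mapDomain (· + 1)
      + ((P.coeff U).mapRange (fun v => Δ * v ^ q ^ 2) (by simp [zero_pow (pow_ne_zero 2 hq0)])).mapDomain (· + 2) := by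
  set f := P.coeff U with hf
  have hz : ∀ i : ℕ, P.C (0 : L) * P.tau ^ i = 0 := by simp
  have hadd : ∀ (i : ℕ) (a b : L),
      P.C (a + b) * P.tau ^ i = P.C a * P.tau ^ i + P.C b * P.tau ^ i := by
    intro i a b; rw [map_add, add_mul]
  have comm1 : ∀ (v : L) (i : ℕ),
      P.tau * (P.C v * P.tau ^ i) = P.C (v ^ q) * P.tau ^ (i + 1) := by
    intro v i
    rw [← mul_assoc, P.tau_comm, mul_assoc, ← pow_succ']
  have comm2 : ∀ (v : L) (i : ℕ),
      P.tau ^ 2 * (P.C v * P.tau ^ i) = P.C (v ^ q ^ 2) * P.tau ^ (i + 2) := by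
    intro v i
    rw [← mul_assoc, P.tau_pow_comm, mul_assoc, ← pow_add]
    ring_nf
  have key : ((f.mapRange (fun v => c * v) (by simp)
      + (f.mapRange (fun v => g * v ^ q) (by simp [zero_pow hq0])).mapDomain (· + 1)
      + (f.mapRange (fun v => Δ * v ^ q ^ 2) (by simp [zero_pow (pow_ne_zero 2 hq0)])).mapDomain (· + 2)).sum
        fun i a => P.C a * P.tau ^ i)
      = (P.C c + P.C g * P.tau + P.C Δ * P.tau ^ 2) * U := by
    rw [Finsupp.sum_add_index' hz hadd, Finsupp.sum_add_index' hz hadd,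
      Finsupp.sum_mapDomain_index hz hadd, Finsupp.sum_mapDomain_index hz hadd,
      Finsupp.sum_mapRange_index (by simp), Finsupp.sum_mapRange_index (by simp),
      Finsupp.sum_mapRange_index (by simp)]
    conv_rhs => rw [← P.sum_coeff U, ← hf, Finsupp.mul_sum]
    rw [← Finsupp.sum_add, ← Finsupp.sum_add]
    apply Finsupp.sum_congr
    intro i _
    rw [add_mul, add_mul, ← mul_assoc, ← map_mul]
    congr 1
    congr 1
    · rw [mul_assoc, comm1, ← mul_assoc, ← map_mul]
    · rw [mul_assoc, comm2, ← mul_assoc, ← map_mul]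
  rw [← key, P.coeff_unique]

lemma coeff_phiX_mul_apply (hq0 : q ≠ 0) (c g Δ : L) (U : S) (m : ℕ) :
    P.coeff ((P.C c + P.C g * P.tau + P.C Δ * P.tau ^ 2) * U) (m + 2) =
      c * P.coeff U (m + 2) + g * P.coeff U (m + 1) ^ q + Δ * P.coeff U m ^ q ^ 2 := by
  rw [P.coeff_phiX_mul hq0]
  have h1 : (((P.coeff U).mapRange (fun v => g * v ^ q)
      (by simp [zero_pow hq0])).mapDomain (· + 1)) (m + 2) = g * P.coeff U (m + 1) ^ q := by
    have := Finsupp.mapDomain_apply (f := fun i : ℕ => i + 1) (add_left_injective 1)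
      ((P.coeff U).mapRange (fun v => g * v ^ q) (by simp [zero_pow hq0])) (m + 1)
    rw [Finsupp.mapRange_apply] at this
    exact this
  have h2 : (((P.coeff U).mapRange (fun v => Δ * v ^ q ^ 2)
      (by simp [zero_pow (pow_ne_zero 2 hq0)])).mapDomain (· + 2)) (m + 2)
      = Δ * P.coeff U m ^ q ^ 2 := by
    have := Finsupp.mapDomain_apply (f := fun i : ℕ => i + 2) (add_left_injective 2)
      ((P.coeff U).mapRange (fun v => Δ * v ^ q ^ 2)
        (by simp [zero_pow (pow_ne_zero 2 hq0)])) m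
    rw [Finsupp.mapRange_apply] at this
    exact this
  rw [Finsupp.add_apply, Finsupp.add_apply, Finsupp.mapRange_apply, h1, h2]

end SkewPolyRing

lemma nat_geom_sum (r k : ℕ) (hr : 1 ≤ r) :
    (r - 1) * ∑ i ∈ Finset.range k, r ^ i = r ^ k - 1 := by
  induction k with
  | zero => simp
  | succ k ih =>
    rw [Finset.sum_range_succ, Nat.mul_add, ih, pow_succ]
    have h1 : 1 ≤ r ^ k := Nat.one_le_pow _ _ hr
    have h2 : (r - 1) * r ^ k = r * r ^ k - r ^ k := by rw [Nat.sub_mul, one_mul]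
    have h3 : r * r ^ k = r ^ k * r := mul_comm _ _
    have h4 : r ^ k ≤ r * r ^ k := Nat.le_mul_of_pos_left _ (by omega)
    omega

/-- for any nonzero `C ∈ F_q[x]` of degree `k`, the skew polynomial
`φ(C)` has degree exactly `2k`, with leading coefficient
`c_k · Δ ^ ((q^(2k) - 1)/(q² - 1))`, where `c_k` is the leading coefficient of `C`. -/
theorem degree_and_leading_coeff_phi_C
    (p q : ℕ) (Fq L S : Type*) [Field Fq] [Fintype Fq] [Field L] [Fintype L]
    [Algebra Fq L] [Ring S] (hp : p.Prime) [CharP L p]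
    (hq : q = Fintype.card Fq)
    (P : SkewPolyRing q L S)
    (c g Δ : L) (hΔ : Δ ≠ 0)
    (φ : Polynomial Fq →+* S)
    (hconst : ∀ a : Fq, φ (Polynomial.C a) = P.C (algebraMap Fq L a))
    (hX : φ Polynomial.X = P.C c + P.C g * P.tau + P.C Δ * P.tau ^ 2)
    (C : Polynomial Fq) (hC : C ≠ 0) (k : ℕ) (hk : C.natDegree = k) :
    P.degree (φ C) = (2 * k : ℕ) ∧
    P.coeff (φ C) (2 * k) =
      algebraMap Fq L C.leadingCoeff * Δ ^ ((q ^ (2 * k) - 1) / (q ^ 2 - 1)) := by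
  have hq1 : 1 < q := by rw [hq]; exact Fintype.one_lt_card
  have hq0 : q ≠ 0 := by omega
  have hfrob : ∀ a : Fq, (algebraMap Fq L a) ^ q ^ 2 = algebraMap Fq L a := by
    intro a
    rw [← map_pow]
    congr 1
    rw [hq]
    exact FiniteField.pow_card_pow 2 a
  have key : ∀ (n : ℕ) (D : Polynomial Fq), D.natDegree ≤ n →
      (∀ m, 2 * D.natDegree < m → P.coeff (φ D) m = 0) ∧
      P.coeff (φ D) (2 * D.natDegree) =
        algebraMap Fq L D.leadingCoeff *
          Δ ^ (∑ i ∈ Finset.range D.natDegree, (q ^ 2) ^ i) := by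
    intro n
    induction n with
    | zero =>
      intro D hD
      rw [Polynomial.eq_C_of_natDegree_le_zero hD, hconst, P.coeff_C]
      constructor
      · intro m hm
        rw [Polynomial.natDegree_C] at hm
        exact Finsupp.single_eq_of_ne (by omega)
      · simp
    | succ n ih =>
      intro D hD
      by_cases hn : D.natDegree ≤ n
      · exact ih D hn
      · have hdeg : D.natDegree = n + 1 := by omega
        have hE : D.divX.natDegree = n := by
          rw [Polynomial.natDegree_divX_eq_natDegree_tsub_one, hdeg]; omega
        have hlc : D.divX.leadingCoeff = D.leadingCoeff := by
          rw [Polynomial.leadingCoeff, hE, Polynomial.coeff_divX,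
            Polynomial.leadingCoeff, hdeg]
        obtain ⟨ih1, ih2⟩ := ih D.divX (le_of_eq hE)
        rw [hE] at ih1 ih2
        rw [hlc] at ih2
        have hφ : φ D = (P.C c + P.C g * P.tau + P.C Δ * P.tau ^ 2) * φ D.divX
            + P.C (algebraMap Fq L (D.coeff 0)) := by
          conv_lhs => rw [← Polynomial.X_mul_divX_add D]
          rw [map_add, map_mul, hX, hconst]
        rw [hφ]
        constructor
        · intro m hm
          rw [hdeg] at hm
          obtain ⟨m', rfl⟩ : ∃ m', m = m' + 2 := ⟨m - 2, by omega⟩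
          rw [P.coeff_add, Finsupp.add_apply, P.coeff_C,
            P.coeff_phiX_mul_apply hq0, ih1 (m' + 2) (by omega),
            ih1 (m' + 1) (by omega), ih1 m' (by omega),
            Finsupp.single_eq_of_ne (by omega)]
          simp [zero_pow hq0, zero_pow (pow_ne_zero 2 hq0)]
        · rw [hdeg, show 2 * (n + 1) = 2 * n + 2 by ring,
            P.coeff_add, Finsupp.add_apply, P.coeff_C,
            P.coeff_phiX_mul_apply hq0, ih1 (2 * n + 2) (by omega),
            ih1 (2 * n + 1) (by omega), ih2,
            Finsupp.single_eq_of_ne (by omega)]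
          have he : (∑ i ∈ Finset.range (n + 1), (q ^ 2) ^ i)
              = (∑ i ∈ Finset.range n, (q ^ 2) ^ i) * q ^ 2 + 1 := by
            rw [Finset.sum_range_succ']
            simp [pow_succ, Finset.sum_mul]
          rw [he, mul_pow, hfrob, ← pow_mul, pow_add, pow_one, zero_pow hq0]
          ring
  obtain ⟨h1, h2⟩ := key k C (le_of_eq hk)
  rw [hk] at h1 h2
  have hq2pos : 0 < q ^ 2 - 1 := by
    have : 2 ≤ q := hq1
    have : 4 ≤ q ^ 2 := by nlinarith
    omega
  have hdiv : (q ^ (2 * k) - 1) / (q ^ 2 - 1) = ∑ i ∈ Finset.range k, (q ^ 2) ^ i := by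
    have hg := nat_geom_sum (q ^ 2) k (Nat.one_le_pow _ _ (by omega))
    rw [pow_mul, ← hg, Nat.mul_div_cancel_left _ hq2pos]
  constructor
  · have hne : P.coeff (φ C) (2 * k) ≠ 0 := by
      rw [h2]
      apply mul_ne_zero
      · intro h0
        exact Polynomial.leadingCoeff_ne_zero.mpr hC
          ((algebraMap Fq L).injective (by rw [h0, map_zero]))
      · exact pow_ne_zero _ hΔ
    have hmem : (2 * k) ∈ (P.coeff (φ C)).support := Finsupp.mem_support_iff.mpr hne
    apply le_antisymm
    · apply Finset.max_le
      intro b hb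
      have hb2 : b ≤ 2 * k := by
        by_contra hb2
        exact (Finsupp.mem_support_iff.mp hb) (h1 b (by omega))
      exact WithBot.coe_le_coe.mpr hb2
    · exact Finset.le_max hmem
  · rw [h2, hdiv]
end

section
/- Let φ be a rank two Drinfeld module over (L, γ) with L of degree n over F_q, and let Φ_x = γ(x)·Id + g·π + Δ·π² ∈ End_{F_q}(L) with Δ ≠ 0. Then the minimal polynomial Γ ∈ F_q[x] of Φ_x has degree ν satisfying 2ν ≥ n. -/
open Polynomial

noncomputable def iterComp {K : Type*} [Field K] (f : K[X]) : ℕ → K[X]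
  | 0 => X
  | (i+1) => f.comp (iterComp f i)

theorem iterComp_eval {K : Type*} [Field K] (f : K[X]) (Φ : K → K)
    (h : ∀ v, Φ v = f.eval v) (i : ℕ) (v : K) :
    (iterComp f i).eval v = Φ^[i] v := by
  induction i with
  | zero => simp [iterComp]
  | succ i ih =>
      rw [iterComp, Function.iterate_succ_apply', eval_comp, ih, h]

theorem iterComp_natDegree {K : Type*} [Field K] (f : K[X]) (i : ℕ) :
    (iterComp f i).natDegree = f.natDegree ^ i := by
  induction i with
  | zero => simp [iterComp]
  | succ i ih => rw [iterComp, natDegree_comp, ih, pow_succ']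

theorem iterComp_leadingCoeff_ne_zero {K : Type*} [Field K] (f : K[X])
    (hf : f.leadingCoeff ≠ 0) (hd : f.natDegree ≠ 0) (i : ℕ) :
    (iterComp f i).leadingCoeff ≠ 0 := by
  induction i with
  | zero => simp [iterComp]
  | succ i ih =>
      rw [iterComp, leadingCoeff_comp]
      · exact mul_ne_zero hf (pow_ne_zero _ ih)
      · rw [iterComp_natDegree]; exact pow_ne_zero _ hd

/-- for a rank two Drinfeld module with
`Φ_x = γ(x)·Id + g·π + Δ·π²` (`Δ ≠ 0`) on a degree-`n` extension `L` of `F_q`,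
the minimal polynomial `Γ` of `Φ_x` over `F_q` has degree `ν` with `2ν ≥ n`.
Annihilation by a polynomial `G` is expressed pointwise:
`∑ i, G.coeff i • Φ_x^[i] v = 0` for all `v ∈ L`. -/
theorem minpoly_of_Phi_x_degree_ge_half_n
    (q n : ℕ) (Fq L : Type*) [Field Fq] [Fintype Fq] [Field L] [Algebra Fq L]
    [FiniteDimensional Fq L]
    (hq : q = Fintype.card Fq) (hn : Module.finrank Fq L = n)
    (c g Δ : L) (hΔ : Δ ≠ 0)
    (γ : Polynomial Fq →+* L) (hc : c = γ Polynomial.X)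
    (Φ : L → L) (hΦ : ∀ v : L, Φ v = c * v + g * v ^ q + Δ * v ^ q ^ 2)
    (Γ : Polynomial Fq) (hmonic : Γ.Monic)
    (hann : ∀ v : L, ∑ i ∈ Finset.range (Γ.natDegree + 1),
        algebraMap Fq L (Γ.coeff i) * Φ^[i] v = 0)
    (hmin : ∀ G : Polynomial Fq, G ≠ 0 →
        (∀ v : L, ∑ i ∈ Finset.range (G.natDegree + 1),
          algebraMap Fq L (G.coeff i) * Φ^[i] v = 0) →
        Γ.natDegree ≤ G.natDegree) :
    n ≤ 2 * Γ.natDegree := by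
  classical
  have hq2 : 1 < q := by rw [hq]; exact Fintype.one_lt_card
  have hqq : 1 < q ^ 2 := one_lt_pow₀ hq2 two_ne_zero
  have hqlt : q < q ^ 2 := by
    calc q = q ^ 1 := (pow_one q).symm
    _ < q ^ 2 := pow_lt_pow_right₀ hq2 one_lt_two
  set ν := Γ.natDegree with hν
  set f : L[X] := C c * X + C g * X ^ q + C Δ * X ^ q ^ 2 with hf
  have hcoefftop : f.coeff (q ^ 2) = Δ := by
    simp [hf, coeff_X, hqq.ne, hqq.ne', hqlt.ne, hqlt.ne']
  have hdegle : f.natDegree ≤ q ^ 2 := by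
    refine (natDegree_add_le _ _).trans (max_le ((natDegree_add_le _ _).trans (max_le ?_ ?_)) ?_)
    · exact (natDegree_C_mul_le _ _).trans (by simpa using hqq.le)
    · exact (natDegree_C_mul_le _ _).trans (by simpa using hqlt.le)
    · exact (natDegree_C_mul_le _ _).trans (by simp)
  have hdeg : f.natDegree = q ^ 2 :=
    le_antisymm hdegle (le_natDegree_of_ne_zero (hcoefftop ▸ hΔ))
  have hlc : f.leadingCoeff = Δ := by
    rw [leadingCoeff, hdeg, hcoefftop]
  have heval : ∀ v : L, Φ v = f.eval v := by
    intro v; simp [hf, hΦ v]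
  set P : L[X] := ∑ i ∈ Finset.range (ν + 1),
      C (algebraMap Fq L (Γ.coeff i)) * iterComp f i with hP
  have hPdegle : P.natDegree ≤ (q ^ 2) ^ ν := by
    refine natDegree_sum_le_of_forall_le _ _ fun i hi => ?_
    refine (natDegree_C_mul_le _ _).trans ?_
    rw [iterComp_natDegree, hdeg]
    exact pow_le_pow_right₀ hqq.le (Nat.lt_succ_iff.mp (Finset.mem_range.mp hi))
  have hPcoeff : P.coeff ((q ^ 2) ^ ν) ≠ 0 := by
    rw [hP, finset_sum_coeff, Finset.sum_eq_single ν]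
    · rw [coeff_C_mul]
      have h1 : algebraMap Fq L (Γ.coeff ν) = 1 := by
        rw [hν, ← leadingCoeff, hmonic.leadingCoeff, map_one]
      have h2 : (iterComp f ν).coeff ((q ^ 2) ^ ν) = (iterComp f ν).leadingCoeff := by
        rw [leadingCoeff, iterComp_natDegree, hdeg]
      rw [h1, one_mul, h2]
      exact iterComp_leadingCoeff_ne_zero f (hlc ▸ hΔ) (hdeg ▸ (Nat.zero_lt_of_lt hqq).ne') ν
    · intro i hi hine
      apply coeff_eq_zero_of_natDegree_lt
      have hile : i < ν := lt_of_le_of_ne (Nat.lt_succ_iff.mp (Finset.mem_range.mp hi)) hine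
      refine lt_of_le_of_lt ((natDegree_C_mul_le _ _).trans ?_) (pow_lt_pow_right₀ hqq hile)
      rw [iterComp_natDegree, hdeg]
    · intro h; exact absurd (Finset.self_mem_range_succ ν) h
  have hP0 : P ≠ 0 := fun h => hPcoeff (by simp [h])
  have hPeval : ∀ v : L, P.eval v = 0 := by
    intro v
    rw [hP, eval_finset_sum]
    rw [← hann v]
    refine Finset.sum_congr rfl fun i _ => ?_
    rw [eval_mul, eval_C, iterComp_eval f Φ heval]
  -- every element of L is a root of P
  haveI : Finite L := Module.finite_of_finite Fq
  letI : Fintype L := Fintype.ofFinite L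
  have hsub : (Finset.univ : Finset L) ⊆ P.roots.toFinset := by
    intro v _
    rw [Multiset.mem_toFinset, mem_roots hP0]
    exact hPeval v
  have hcard : Fintype.card L ≤ P.natDegree := by
    calc Fintype.card L = (Finset.univ : Finset L).card := rfl
    _ ≤ P.roots.toFinset.card := Finset.card_le_card hsub
    _ ≤ Multiset.card P.roots := Multiset.toFinset_card_le _
    _ ≤ P.natDegree := P.card_roots'
  have hcardL : Fintype.card L = q ^ n := by
    rw [hq, ← hn]; exact Module.card_eq_pow_finrank
  have key : q ^ n ≤ q ^ (2 * ν) := by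
    calc q ^ n = Fintype.card L := hcardL.symm
    _ ≤ P.natDegree := hcard
    _ ≤ (q ^ 2) ^ ν := hPdegle
    _ = q ^ (2 * ν) := by rw [← pow_mul]
  exact (pow_le_pow_iff_right₀ hq2).mp key
end

section
/- If the minimal polynomial Γ of Φ_x = γ(x)·Id + g·π + Δ·π² were to have degree ν with 2ν ≤ n - 1, then evaluating Γ at Φ_x and expanding in powers of π yields a nontrivial L-linear relation c̄_0·Id + c̄_1·π + ... + c̄_{2ν}·π^{2ν} = 0 with leading coefficient c̄_{2ν} = Δ^{(1-q^{2ν})/(1-q)} ≠ 0, contradicting the linear independence of Id, π, ..., π^{n-1} over L. -/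
open Finset

section CoefAux

variable {L : Type*} [Field L]

/-- Coefficients of `Φ^[i]` expanded in `q`-power monomials. -/
def coefA (q : ℕ) (c g Δ : L) : ℕ → ℕ → L
  | 0, j => if j = 0 then 1 else 0
  | (i+1), 0 => c * coefA q c g Δ i 0
  | (i+1), 1 => c * coefA q c g Δ i 1 + g * (coefA q c g Δ i 0) ^ q
  | (i+1), (j+2) => c * coefA q c g Δ i (j+2) + g * (coefA q c g Δ i (j+1)) ^ q
      + Δ * (coefA q c g Δ i j) ^ q ^ 2

lemma coefA_eq_zero (q : ℕ) (c g Δ : L) (hq0 : q ≠ 0) :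
    ∀ i j, 2 * i < j → coefA q c g Δ i j = 0 := by
  intro i
  induction i with
  | zero =>
    intro j h
    have : j ≠ 0 := by omega
    simp [coefA, this]
  | succ i ih =>
    intro j h
    rcases j with _ | _ | j
    · omega
    · omega
    · simp only [coefA]
      rw [ih (j+2) (by omega), ih (j+1) (by omega), ih j (by omega)]
      simp [zero_pow hq0, zero_pow (pow_ne_zero 2 hq0)]

lemma coefA_top_ne_zero (q : ℕ) (c g Δ : L) (hq0 : q ≠ 0) (hΔ : Δ ≠ 0) :
    ∀ i, coefA q c g Δ i (2*i) ≠ 0 := by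
  intro i
  induction i with
  | zero => simp [coefA]
  | succ i ih =>
    rw [show 2*(i+1) = (2*i)+2 by ring]
    simp only [coefA]
    rw [coefA_eq_zero q c g Δ hq0 i (2*i+2) (by omega),
        coefA_eq_zero q c g Δ hq0 i (2*i+1) (by omega)]
    simp only [mul_zero, zero_pow hq0, zero_add, add_zero]
    exact mul_ne_zero hΔ (pow_ne_zero _ ih)

lemma iterate_eq_sum_coefA (q : ℕ) (c g Δ : L) (hq0 : q ≠ 0)
    (φ : L →+* L) (hφ : ∀ x, φ x = x ^ q)
    (Φ : L → L) (hΦ : ∀ v, Φ v = c * v + g * v ^ q + Δ * v ^ q ^ 2) :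
    ∀ i v, Φ^[i] v = ∑ j ∈ range (2*i+1), coefA q c g Δ i j * v ^ q ^ j := by
  intro i
  induction i with
  | zero => intro v; simp [coefA]
  | succ i ih =>
    intro v
    have dec : ∀ (f : ℕ → L), ∑ j ∈ range (2*i+3), f j
        = (∑ j ∈ range (2*i+1), f (j+2)) + f 1 + f 0 := by
      intro f
      rw [show 2*i+3 = (2*i+2)+1 by omega, Finset.sum_range_succ',
          show 2*i+2 = (2*i+1)+1 by omega, Finset.sum_range_succ']
    have dec2 : ∀ (f : ℕ → L), ∑ j ∈ range (2*i+2), f j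
        = (∑ j ∈ range (2*i+1), f (j+1)) + f 0 := by
      intro f
      rw [show 2*i+2 = (2*i+1)+1 by omega, Finset.sum_range_succ']
    have e1 : Φ^[i] v = ∑ j ∈ range (2*i+3), coefA q c g Δ i j * v ^ q ^ j := by
      rw [ih]
      refine Finset.sum_subset (Finset.range_subset_range.2 (by omega)) fun j hj hj' => ?_
      rw [coefA_eq_zero q c g Δ hq0 i j
        (by simp only [Finset.mem_range] at hj hj'; omega), zero_mul]
    have e1' : Φ^[i] v = ∑ j ∈ range (2*i+2), coefA q c g Δ i j * v ^ q ^ j := by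
      rw [ih]
      refine Finset.sum_subset (Finset.range_subset_range.2 (by omega)) fun j hj hj' => ?_
      rw [coefA_eq_zero q c g Δ hq0 i j
        (by simp only [Finset.mem_range] at hj hj'; omega), zero_mul]
    have e2 : (Φ^[i] v) ^ q
        = ∑ j ∈ range (2*i+2), (coefA q c g Δ i j) ^ q * v ^ q ^ (j+1) := by
      rw [e1', ← hφ, map_sum]
      refine Finset.sum_congr rfl fun j _ => ?_
      rw [hφ, mul_pow, ← pow_mul, ← pow_succ]
    have h2 : ∀ x : L, x ^ q ^ 2 = φ (φ x) := by
      intro x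
      rw [hφ, hφ, ← pow_mul, sq]
    have e3 : (Φ^[i] v) ^ q ^ 2
        = ∑ j ∈ range (2*i+1), (coefA q c g Δ i j) ^ (q^2) * v ^ q ^ (j+2) := by
      rw [ih, h2, map_sum, map_sum]
      refine Finset.sum_congr rfl fun j _ => ?_
      rw [← h2, mul_pow, ← pow_mul, ← pow_add]
    rw [Function.iterate_succ_apply', hΦ, e2, e3, e1,
        show 2*(i+1)+1 = 2*i+3 by ring,
        Finset.mul_sum, Finset.mul_sum, Finset.mul_sum, dec, dec, dec2]
    have hmerge : ∑ j ∈ range (2*i+1), coefA q c g Δ (i+1) (j+2) * v ^ q ^ (j+2)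
        = ∑ j ∈ range (2*i+1), (c * (coefA q c g Δ i (j+2) * v ^ q ^ (j+2))
            + g * ((coefA q c g Δ i (j+1)) ^ q * v ^ q ^ (j+1+1))
            + Δ * ((coefA q c g Δ i j) ^ (q^2) * v ^ q ^ (j+2))) := by
      refine Finset.sum_congr rfl fun j _ => ?_
      simp only [coefA]
      ring
    rw [hmerge, Finset.sum_add_distrib, Finset.sum_add_distrib]
    simp only [coefA]
    ring

end CoefAux

/-- if the minimal polynomial `Γ` of `Φ_x = γ(x)·Id + g·π + Δ·π²`
had degree `ν` with `2ν ≤ n - 1`, then evaluating `Γ` at `Φ_x` and expanding in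
powers of `π` would yield a nontrivial `L`-linear relation
`c̄_0·Id + ⋯ + c̄_{2ν}·π^{2ν} = 0` whose leading coefficient is
`c̄_{2ν} = Δ^{(1-q^{2ν})/(1-q)} = Δ^{(q^{2ν}-1)/(q-1)} ≠ 0`, contradicting the
linear independence of `Id, π, …, π^{n-1}` over `L` (hence `False`). -/
theorem minpoly_small_degree_gives_contradiction
    (q n : ℕ) (Fq L : Type*) [Field Fq] [Fintype Fq] [Field L] [Algebra Fq L]
    [FiniteDimensional Fq L]
    (hq : q = Fintype.card Fq) (hn : Module.finrank Fq L = n)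
    (c g Δ : L) (hΔ : Δ ≠ 0)
    (γ : Polynomial Fq →+* L) (hc : c = γ Polynomial.X)
    (Φ : L → L) (hΦ : ∀ v : L, Φ v = c * v + g * v ^ q + Δ * v ^ q ^ 2)
    (Γ : Polynomial Fq) (hmonic : Γ.Monic)
    (hann : ∀ v : L, ∑ i ∈ Finset.range (Γ.natDegree + 1),
        algebraMap Fq L (Γ.coeff i) * Φ^[i] v = 0)
    (hmin : ∀ G : Polynomial Fq, G ≠ 0 →
        (∀ v : L, ∑ i ∈ Finset.range (G.natDegree + 1),
          algebraMap Fq L (G.coeff i) * Φ^[i] v = 0) →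
        Γ.natDegree ≤ G.natDegree)
    (hsmall : 2 * Γ.natDegree ≤ n - 1) (hn1 : 1 ≤ n) :
    (∃ cbar : ℕ → L,
      (∀ v : L, ∑ i ∈ Finset.range (2 * Γ.natDegree + 1), cbar i * v ^ q ^ i = 0) ∧
      cbar (2 * Γ.natDegree) = Δ ^ ((q ^ (2 * Γ.natDegree) - 1) / (q - 1)) ∧
      cbar (2 * Γ.natDegree) ≠ 0) ∧ False := by
  have hq2 : 2 ≤ q := by rw [hq]; exact Fintype.one_lt_card
  have hq0 : q ≠ 0 := by omega
  -- the `q`-power map is a ring homomorphism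
  obtain ⟨p, hcharFq⟩ := CharP.exists Fq
  haveI := hcharFq
  obtain ⟨m, hp, hcard⟩ := FiniteField.card Fq p
  haveI : CharP L p := charP_of_injective_algebraMap (algebraMap Fq L).injective p
  haveI : ExpChar L p := ExpChar.prime hp
  have hqpm : q = p ^ (m : ℕ) := hq.trans hcard
  set φ : L →+* L := iterateFrobenius L p (m : ℕ) with hφdef
  have hφ : ∀ x : L, φ x = x ^ q := fun x => by
    rw [hφdef, iterateFrobenius_def, ← hqpm]
  set ν := Γ.natDegree with hν
  have hiter := iterate_eq_sum_coefA q c g Δ hq0 φ hφ Φ hΦ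
  set b : ℕ → L := fun i => algebraMap Fq L (Γ.coeff i) with hb
  set cb : ℕ → L := fun j => ∑ i ∈ range (ν+1), b i * coefA q c g Δ i j with hcb
  -- the linear relation
  have hrel : ∀ v : L, ∑ j ∈ range (2*ν+1), cb j * v ^ q ^ j = 0 := by
    intro v
    calc ∑ j ∈ range (2*ν+1), cb j * v ^ q ^ j
        = ∑ j ∈ range (2*ν+1), ∑ i ∈ range (ν+1),
            b i * (coefA q c g Δ i j * v ^ q ^ j) := by
          refine Finset.sum_congr rfl fun j _ => ?_
          rw [hcb, Finset.sum_mul]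
          exact Finset.sum_congr rfl fun i _ => by ring
      _ = ∑ i ∈ range (ν+1), ∑ j ∈ range (2*ν+1),
            b i * (coefA q c g Δ i j * v ^ q ^ j) := Finset.sum_comm
      _ = ∑ i ∈ range (ν+1), b i * Φ^[i] v := by
          refine Finset.sum_congr rfl fun i hi => ?_
          rw [hiter i v, Finset.mul_sum]
          refine (Finset.sum_subset (Finset.range_subset_range.2 ?_) fun j hj hj' => ?_).symm
          · simp only [Finset.mem_range] at hi; omega
          · rw [coefA_eq_zero q c g Δ hq0 i j
              (by simp only [Finset.mem_range] at hj hj'; omega), zero_mul, mul_zero]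
      _ = 0 := hann v
  -- the top coefficient
  have htop : cb (2*ν) = coefA q c g Δ ν (2*ν) := by
    show ∑ i ∈ range (ν+1), b i * coefA q c g Δ i (2*ν) = _
    rw [Finset.sum_eq_single ν]
    · rw [hb]
      simp only
      rw [hν, Polynomial.Monic.coeff_natDegree hmonic, map_one, one_mul]
    · intro i hi hine
      rw [coefA_eq_zero q c g Δ hq0 i (2*ν)
        (by simp only [Finset.mem_range] at hi; omega), mul_zero]
    · intro h
      exact absurd (Finset.self_mem_range_succ ν) h
  have htopne : cb (2*ν) ≠ 0 := by
    rw [htop]; exact coefA_top_ne_zero q c g Δ hq0 hΔ ν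
  -- derive the contradiction using linear independence of characters
  haveI : Finite L := Module.finite_of_finite Fq
  haveI : Fintype L := Fintype.ofFinite L
  have hcardL : Fintype.card L = q ^ n := by
    rw [hq, Module.card_eq_pow_finrank (K := Fq) (V := L), hn]
  haveI : DecidableEq L := Classical.decEq L
  haveI : Fintype Lˣ := Fintype.ofFinite Lˣ
  have hfalse : False := by
    have hinj : Function.Injective
        (fun j : Fin (2*ν+1) => (powMonoidHom (q ^ (j:ℕ)) : L →* L)) := by
      obtain ⟨x, hx⟩ := IsCyclic.exists_generator (α := Lˣ)
      have hord : orderOf x = q ^ n - 1 := by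
        rw [orderOf_eq_card_of_forall_mem_zpowers hx, Nat.card_units,
          Nat.card_eq_fintype_card, hcardL]
      have key : ∀ a b : ℕ, a < b → b ≤ n - 1 →
          (powMonoidHom (q ^ a) : L →* L) ≠ powMonoidHom (q ^ b) := by
        intro a b hab hbn heq
        have hx2 : (x : L) ^ q ^ a = (x : L) ^ q ^ b := by
          have := DFunLike.congr_fun heq (x : L)
          simpa [powMonoidHom_apply] using this
        have hxu : x ^ q ^ a = x ^ q ^ b := Units.ext (by
          rwa [Units.val_pow_eq_pow_val, Units.val_pow_eq_pow_val])
        have hqb : q ^ b < q ^ n - 1 := by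
          have h1 : q ^ b ≤ q ^ (n-1) := Nat.pow_le_pow_right (by omega) hbn
          have hn2 : 2 ≤ n := by omega
          have h3 : q ^ (n-1) * 2 ≤ q ^ (n-1) * q := Nat.mul_le_mul_left _ hq2
          have h4 : q ^ (n-1) * q = q ^ n := by
            rw [← pow_succ]; congr 1; omega
          have h5 : 2 ≤ q ^ (n-1) :=
            le_trans hq2 (Nat.le_self_pow (by omega) q)
          omega
        have hqa : q ^ a < q ^ n - 1 :=
          lt_of_le_of_lt (Nat.pow_le_pow_right (by omega) (le_of_lt hab)) hqb
        have := pow_injOn_Iio_orderOf (x := x)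
          (by rw [hord]; exact Set.mem_Iio.2 hqa)
          (by rw [hord]; exact Set.mem_Iio.2 hqb) hxu
        have : q ^ a < q ^ b := Nat.pow_lt_pow_right (by omega) hab
        omega
      intro j1 j2 hjeq
      by_contra hne
      have hne' : (j1 : ℕ) ≠ (j2 : ℕ) := fun h => hne (Fin.ext h)
      have hb1 : (j1 : ℕ) ≤ n - 1 := by have := j1.isLt; omega
      have hb2 : (j2 : ℕ) ≤ n - 1 := by have := j2.isLt; omega
      rcases lt_or_gt_of_ne hne' with h | h
      · exact key _ _ h hb2 hjeq
      · exact key _ _ h hb1 hjeq.symm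
    have hli : LinearIndependent L
        (fun j : Fin (2*ν+1) => ((powMonoidHom (q ^ (j:ℕ)) : L →* L) : L → L)) :=
      (linearIndependent_monoidHom L L).comp _ hinj
    have hzero : ∑ j : Fin (2*ν+1),
        cb (j : ℕ) • ((powMonoidHom (q ^ (j:ℕ)) : L →* L) : L → L) = 0 := by
      funext v
      have := hrel v
      rw [← Fin.sum_univ_eq_sum_range (fun j => cb j * v ^ q ^ j) (2*ν+1)] at this
      simpa [Finset.sum_apply, powMonoidHom_apply] using this
    have := Fintype.linearIndependent_iff.mp hli (fun j => cb (j : ℕ)) hzero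
      ⟨2*ν, by omega⟩
    exact htopne this
  exact ⟨hfalse.elim, hfalse⟩
end

section
/- Suppose the characteristic equation τ^{2n} - φ(A)τ^n + φ(B) = 0 holds in L⟨τ⟩, and let E ∈ F_q[x] with F := φ(E). Then reducing modulo F (right Euclidean division) gives T^n(φ(A mod E)) = T^{2n}(1) + φ(B mod E) mod F, where T : L⟨τ⟩_{<deg F} → L⟨τ⟩_{<deg F} is U ↦ τU mod F. In particular, φ(A mod E) mod F = T^{-n}(T^{2n}(1) + (φ(B mod E) mod F)) when T is invertible. -/
namespace SkewPolyAux

variable {q : ℕ} {L S : Type*} [Field L] [Ring S]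

noncomputable def ofF (P : SkewPolyRing q L S) : (ℕ →₀ L) →+ S :=
  Finsupp.liftAddHom fun i =>
    (AddMonoidHom.mulRight (P.tau ^ i)).comp P.C.toAddMonoidHom

variable (P : SkewPolyRing q L S)

lemma ofF_apply (f : ℕ →₀ L) : ofF P f = f.sum fun i a => P.C a * P.tau ^ i := by
  rw [ofF, Finsupp.liftAddHom_apply]; rfl

lemma ofF_single (i : ℕ) (a : L) : ofF P (Finsupp.single i a) = P.C a * P.tau ^ i := by
  rw [ofF_apply, Finsupp.sum_single_index]; simp

lemma ofF_coeff (U : S) : ofF P (P.coeff U) = U := by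
  rw [ofF_apply]; exact P.sum_coeff U

lemma ofF_injective : Function.Injective (ofF P) := by
  intro f g h
  have h2 : ofF P (f - g) = 0 := by rw [map_sub, h, sub_self]
  rw [ofF_apply] at h2
  exact sub_eq_zero.mp (P.indep _ h2)

lemma coeff_ofF (f : ℕ →₀ L) : P.coeff (ofF P f) = f :=
  ofF_injective P (ofF_coeff P _)

lemma coeff_add (U V : S) : P.coeff (U + V) = P.coeff U + P.coeff V := by
  apply ofF_injective P
  rw [map_add, ofF_coeff, ofF_coeff, ofF_coeff]

lemma coeff_sub (U V : S) : P.coeff (U - V) = P.coeff U - P.coeff V := by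
  apply ofF_injective P
  rw [map_sub, ofF_coeff, ofF_coeff, ofF_coeff]

lemma coeff_zero : P.coeff 0 = 0 := by
  have := coeff_ofF P 0
  rwa [map_zero] at this

lemma eq_zero_of_coeff_eq_zero {U : S} (h : P.coeff U = 0) : U = 0 := by
  have := ofF_coeff P U
  rw [h, map_zero] at this; exact this.symm

lemma coeff_C_mul_tau_pow (a : L) (i : ℕ) :
    P.coeff (P.C a * P.tau ^ i) = Finsupp.single i a := by
  rw [← ofF_single P, coeff_ofF]

lemma tau_pow_comm (i : ℕ) (u : L) :
    P.tau ^ i * P.C u = P.C (u ^ q ^ i) * P.tau ^ i := by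
  induction i generalizing u with
  | zero => simp
  | succ k ih =>
    rw [pow_succ, mul_assoc, P.tau_comm, ← mul_assoc, ih, ← pow_mul,
      ← pow_succ', mul_assoc]

lemma mono_mul (a b : L) (i j : ℕ) :
    (P.C a * P.tau ^ i) * (P.C b * P.tau ^ j) =
      P.C (a * b ^ q ^ i) * P.tau ^ (i + j) := by
  calc (P.C a * P.tau ^ i) * (P.C b * P.tau ^ j)
      = P.C a * (P.tau ^ i * P.C b) * P.tau ^ j := by rw [mul_assoc, mul_assoc, mul_assoc]
    _ = P.C a * (P.C (b ^ q ^ i) * P.tau ^ i) * P.tau ^ j := by rw [tau_pow_comm]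
    _ = P.C (a * b ^ q ^ i) * P.tau ^ (i + j) := by
        rw [map_mul, pow_add]; rw [mul_assoc, mul_assoc, mul_assoc]

lemma coeff_mul (U V : S) :
    P.coeff (U * V) = (P.coeff U).sum fun i a =>
      (P.coeff V).sum fun j b => Finsupp.single (i + j) (a * b ^ q ^ i) := by
  apply ofF_injective P
  rw [ofF_coeff, map_finsuppSum]
  conv_lhs => rw [← ofF_coeff P U, ← ofF_coeff P V, ofF_apply, ofF_apply, Finsupp.sum_mul]
  refine Finsupp.sum_congr fun i hi => ?_
  rw [map_finsuppSum, Finsupp.mul_sum]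
  refine Finsupp.sum_congr fun j hj => ?_
  rw [ofF_single, mono_mul]

lemma coeff_mul_apply (U V : S) (k : ℕ) :
    P.coeff (U * V) k = ∑ i ∈ (P.coeff U).support, ∑ j ∈ (P.coeff V).support,
      if i + j = k then P.coeff U i * P.coeff V j ^ q ^ i else 0 := by
  rw [coeff_mul, Finsupp.sum_apply, Finsupp.sum]
  refine Finset.sum_congr rfl fun i _ => ?_
  rw [Finsupp.sum_apply, Finsupp.sum]
  refine Finset.sum_congr rfl fun j _ => ?_
  rw [Finsupp.single_apply]

lemma coeff_C (u : L) : P.coeff (P.C u) = Finsupp.single 0 u := by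
  rw [show P.C u = P.C u * P.tau ^ 0 by simp, coeff_C_mul_tau_pow]

lemma degree_eq (U : S) : P.degree U = (P.coeff U).support.max := rfl

lemma coeff_one : P.coeff (1 : S) = Finsupp.single 0 1 := by
  have : (1 : S) = P.C 1 * P.tau ^ 0 := by simp
  rw [this, coeff_C_mul_tau_pow]

/-- Constant coefficient of a product. -/
lemma coeff_mul_zero (U V : S) :
    P.coeff (U * V) 0 = P.coeff U 0 * P.coeff V 0 := by
  rw [coeff_mul_apply]
  by_cases hU : 0 ∈ (P.coeff U).support
  · rw [Finset.sum_eq_single_of_mem 0 hU]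
    · by_cases hV : 0 ∈ (P.coeff V).support
      · rw [Finset.sum_eq_single_of_mem 0 hV]
        · simp
        · intro j hj hj0; simp [Nat.add_eq_zero, hj0]
      · rw [Finsupp.notMem_support_iff.mp hV, mul_zero]
        refine Finset.sum_eq_zero fun j hj => ?_
        have : j ≠ 0 := fun h => hV (h ▸ hj)
        simp [Nat.add_eq_zero, this]
    · intro i hi hi0
      refine Finset.sum_eq_zero fun j hj => ?_
      simp [Nat.add_eq_zero, hi0]
  · rw [Finsupp.notMem_support_iff.mp hU, zero_mul]
    refine Finset.sum_eq_zero fun i hi => ?_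
    refine Finset.sum_eq_zero fun j hj => ?_
    have : i ≠ 0 := fun h => hU (h ▸ hi)
    simp [Nat.add_eq_zero, this]

/-- Top coefficient of a product. -/
lemma coeff_mul_top {U V : S} (hU : P.coeff U ≠ 0) (hV : P.coeff V ≠ 0) :
    P.coeff (U * V)
        ((P.coeff U).support.max' (Finsupp.support_nonempty_iff.mpr hU) +
         (P.coeff V).support.max' (Finsupp.support_nonempty_iff.mpr hV)) ≠ 0 := by
  set sU := (P.coeff U).support
  set sV := (P.coeff V).support
  have hsU : sU.Nonempty := Finsupp.support_nonempty_iff.mpr hU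
  have hsV : sV.Nonempty := Finsupp.support_nonempty_iff.mpr hV
  set dU := sU.max' hsU
  set dV := sV.max' hsV
  rw [coeff_mul_apply]
  have key : ∑ i ∈ sU, ∑ j ∈ sV,
      (if i + j = dU + dV then P.coeff U i * P.coeff V j ^ q ^ i else 0)
      = P.coeff U dU * P.coeff V dV ^ q ^ dU := by
    rw [Finset.sum_eq_single_of_mem dU (Finset.max'_mem _ _)]
    · rw [Finset.sum_eq_single_of_mem dV (Finset.max'_mem _ _)]
      · simp
      · intro j hj hjne
        have : dU + j ≠ dU + dV := fun h =>
          hjne (Nat.add_left_cancel h)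
        simp [this, hjne]
    · intro i hi hine
      refine Finset.sum_eq_zero fun j hj => ?_
      have hi' : i ≤ dU := Finset.le_max' _ _ hi
      have hj' : j ≤ dV := Finset.le_max' _ _ hj
      have : i + j ≠ dU + dV := by
        intro h
        exact hine (le_antisymm hi' (by omega))
      simp [this]
  rw [key]
  exact mul_ne_zero (Finsupp.mem_support_iff.mp (Finset.max'_mem sU hsU))
    (pow_ne_zero _ (Finsupp.mem_support_iff.mp (Finset.max'_mem sV hsV)))

/-- A nonzero left multiple of `F` has degree at least that of `F`. -/
lemma degree_le_of_mul {Q F : S} (hQF : Q * F ≠ 0) (hF : F ≠ 0) :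
    P.degree F ≤ P.degree (Q * F) := by
  have hQ : Q ≠ 0 := by rintro rfl; simp at hQF
  have hcQ : P.coeff Q ≠ 0 := fun h => hQ (eq_zero_of_coeff_eq_zero P h)
  have hcF : P.coeff F ≠ 0 := fun h => hF (eq_zero_of_coeff_eq_zero P h)
  have htop := coeff_mul_top P hcQ hcF
  set dQ := (P.coeff Q).support.max' (Finsupp.support_nonempty_iff.mpr hcQ) with hdQ
  set dF := (P.coeff F).support.max' (Finsupp.support_nonempty_iff.mpr hcF) with hdF
  have h1 : ((dQ + dF : ℕ) : WithBot ℕ) ≤ P.degree (Q * F) :=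
    Finset.le_max (Finsupp.mem_support_iff.mpr htop)
  have h2 : P.degree F = (dF : WithBot ℕ) :=
    (Finset.coe_max' _).symm
  rw [h2]
  exact le_trans (by exact_mod_cast Nat.le_add_left dF dQ) h1

/-- If `τ^n` commutes with every constant, it is central. -/
lemma tau_pow_central (n : ℕ) (hcomm : ∀ u : L, u ^ q ^ n = u) (X : S) :
    P.tau ^ n * X = X * P.tau ^ n := by
  conv_lhs => rw [← ofF_coeff P X]
  conv_rhs => rw [← ofF_coeff P X]
  rw [ofF_apply, Finsupp.mul_sum, Finsupp.sum_mul]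
  refine Finsupp.sum_congr fun i _ => ?_
  rw [← mul_assoc, tau_pow_comm, hcomm, mul_assoc, mul_assoc, pow_mul_comm]

end SkewPolyAux


/-- from the characteristic equation
`τ^{2n} - φ(A)·τ^n + φ(B) = 0` in `L⟨τ⟩`, reducing modulo `F = φ(E)` by right
Euclidean division (`m U` denotes `U mod F`, `T(U) = τU mod F`) gives
`T^n(φ(A mod E) mod F) = T^{2n}(1 mod F) + (φ(B mod E) mod F)`. -/
theorem characteristic_equation_mod_F
    (p q n : ℕ) (Fq L S : Type*) [Field Fq] [Fintype Fq] [Field L] [Fintype L]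
    [Algebra Fq L] [FiniteDimensional Fq L] [Ring S] (hp : p.Prime) [CharP L p]
    (hq : q = Fintype.card Fq) (hn : Module.finrank Fq L = n)
    (P : SkewPolyRing q L S)
    (c g Δ : L) (hΔ : Δ ≠ 0)
    (γ : Polynomial Fq →+* L) (hc : c = γ Polynomial.X)
    (φ : Polynomial Fq →+* S)
    (hconst : ∀ a : Fq, φ (Polynomial.C a) = P.C (algebraMap Fq L a))
    (hX : φ Polynomial.X = P.C c + P.C g * P.tau + P.C Δ * P.tau ^ 2)
    (A B E : Polynomial Fq) (hE : Polynomial.aeval c E ≠ 0)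
    (hchar : P.tau ^ (2 * n) - φ A * P.tau ^ n + φ B = 0)
    (m : S → S)
    (hm : ∀ U : S, (∃ Q : S, U = Q * φ E + m U) ∧
      P.degree (m U) < P.degree (φ E)) :
    (fun U => m (P.tau * U))^[n] (m (φ (A % E))) =
      (fun U => m (P.tau * U))^[2 * n] (m 1) + m (φ (B % E)) := by
  classical
  open SkewPolyAux in
  set F : S := φ E with hF
  set Tm : S → S := fun U => m (P.tau * U) with hTm
  -- every remainder is congruent to the original element modulo right multiples of F
  have hrelm : ∀ U : S, ∃ Q : S, m U - U = Q * F := by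
    intro U
    obtain ⟨Q, hQ⟩ := (hm U).1
    refine ⟨-Q, ?_⟩
    rw [neg_mul]
    nth_rewrite 2 [hQ]
    abel
  -- iterating T^k on m W stays congruent to τ^k·W
  have hiter : ∀ (k : ℕ) (W : S), ∃ Q : S, Tm^[k] (m W) - P.tau ^ k * W = Q * F := by
    intro k
    induction k with
    | zero => intro W; simpa using hrelm W
    | succ k ih =>
      intro W
      obtain ⟨Q, hQ⟩ := ih W
      obtain ⟨Q1, hQ1⟩ := hrelm (P.tau * Tm^[k] (m W))
      refine ⟨Q1 + P.tau * Q, ?_⟩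
      rw [Function.iterate_succ_apply']
      have hbeta : Tm (Tm^[k] (m W)) = m (P.tau * Tm^[k] (m W)) := rfl
      rw [hbeta]
      have h2 : P.tau ^ (k + 1) * W = P.tau * (P.tau ^ k * W) := by
        rw [pow_succ', mul_assoc]
      rw [h2]
      calc m (P.tau * Tm^[k] (m W)) - P.tau * (P.tau ^ k * W)
          = (m (P.tau * Tm^[k] (m W)) - P.tau * Tm^[k] (m W))
            + P.tau * (Tm^[k] (m W) - P.tau ^ k * W) := by rw [mul_sub]; abel
        _ = Q1 * F + P.tau * (Q * F) := by rw [hQ1, hQ]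
        _ = (Q1 + P.tau * Q) * F := by rw [add_mul, mul_assoc]
  -- iterates of T applied to a remainder are remainders
  have hiter_m : ∀ (k : ℕ) (W : S), ∃ V, Tm^[k] (m W) = m V := by
    intro k W
    cases k with
    | zero => exact ⟨W, rfl⟩
    | succ k =>
      exact ⟨P.tau * Tm^[k] (m W), by rw [Function.iterate_succ_apply']⟩
  -- τ^n is central
  have hcard : Fintype.card L = q ^ n := by
    rw [hq, ← hn]; exact Module.card_eq_pow_finrank
  have hfix : ∀ u : L, u ^ q ^ n = u := by
    intro u; rw [← hcard]; exact FiniteField.pow_card u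
  have hcentral : ∀ X : S, P.tau ^ n * X = X * P.tau ^ n :=
    SkewPolyAux.tau_pow_central P n hfix
  -- congruences coming from the polynomial remainders
  have hA : φ A - φ (A % E) = φ (A / E) * F := by
    have hdm := EuclideanDomain.div_add_mod A E
    have hst : A - A % E = A / E * E := by
      rw [mul_comm]; exact (eq_sub_of_add_eq hdm).symm
    rw [hF, ← map_mul, ← map_sub, hst]
  have hB : φ B - φ (B % E) = φ (B / E) * F := by
    have hdm := EuclideanDomain.div_add_mod B E
    have hst : B - B % E = B / E * E := by
      rw [mul_comm]; exact (eq_sub_of_add_eq hdm).symm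
    rw [hF, ← map_mul, ← map_sub, hst]
  have eA1 : φ (A % E) = φ A - φ (A / E) * F := by rw [← hA]; abel
  have eB1 : φ (B % E) = φ B - φ (B / E) * F := by rw [← hB]; abel
  -- rearranged characteristic equation
  have h2 : P.tau ^ (2 * n) + φ B = φ A * P.tau ^ n := by
    have h0 : P.tau ^ (2 * n) + φ B - φ A * P.tau ^ n = 0 := by
      rw [← hchar]; abel
    exact sub_eq_zero.mp h0
  obtain ⟨Qa, hQa⟩ := hiter n (φ (A % E))
  obtain ⟨Qb, hQb⟩ := hiter (2 * n) 1
  obtain ⟨Qc, hQc⟩ := hrelm (φ (B % E))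
  have expandL : Tm^[n] (m (φ (A % E))) =
      P.tau ^ (2 * n) + φ B - (P.tau ^ n * φ (A / E)) * F + Qa * F := by
    rw [eq_add_of_sub_eq hQa, eA1, mul_sub,
      show P.tau ^ n * (φ (A / E) * F) = (P.tau ^ n * φ (A / E)) * F from
        (mul_assoc _ _ _).symm,
      hcentral (φ A), ← h2]
    abel
  have expandR : Tm^[2 * n] (m 1) + m (φ (B % E)) =
      P.tau ^ (2 * n) + φ B - φ (B / E) * F + (Qb * F + Qc * F) := by
    rw [eq_add_of_sub_eq hQb, eq_add_of_sub_eq hQc, eB1, mul_one]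
    abel
  have hsub : Tm^[n] (m (φ (A % E))) - (Tm^[2 * n] (m 1) + m (φ (B % E)))
      = (Qa - P.tau ^ n * φ (A / E) + φ (B / E) - Qb - Qc) * F := by
    rw [expandL, expandR, sub_mul, sub_mul, add_mul, sub_mul]
    abel
  -- F is nonzero since its constant coefficient is E(c) ≠ 0
  have heps : ∀ Pq : Polynomial Fq, P.coeff (φ Pq) 0 = Polynomial.aeval c Pq := by
    intro Pq
    induction Pq using Polynomial.induction_on with
    | C a =>
      rw [hconst a, SkewPolyAux.coeff_C, Polynomial.aeval_C]
      simp
    | add r s ihr ihs =>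
      rw [map_add, map_add, SkewPolyAux.coeff_add, Finsupp.add_apply, ihr, ihs]
    | monomial k a ih =>
      have hsplit : Polynomial.C a * Polynomial.X ^ (k + 1) =
          Polynomial.C a * Polynomial.X ^ k * Polynomial.X := by ring
      have e1 : P.coeff (P.C g * P.tau) = Finsupp.single 1 g := by
        rw [show P.C g * P.tau = P.C g * P.tau ^ 1 by rw [pow_one],
          SkewPolyAux.coeff_C_mul_tau_pow]
      have hphiX : P.coeff (φ Polynomial.X) 0 = c := by
        rw [hX, SkewPolyAux.coeff_add, SkewPolyAux.coeff_add, SkewPolyAux.coeff_C, e1,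
          SkewPolyAux.coeff_C_mul_tau_pow]
        simp [Finsupp.add_apply, Finsupp.single_apply]
      rw [hsplit, map_mul, SkewPolyAux.coeff_mul_zero, ih, hphiX]
      simp [map_mul]
  have hF0 : P.coeff F 0 ≠ 0 := by rw [hF, heps E]; exact hE
  have hFne : F ≠ 0 := by
    intro h
    apply hF0
    rw [h, SkewPolyAux.coeff_zero]
    rfl
  obtain ⟨V1, hV1⟩ := hiter_m n (φ (A % E))
  obtain ⟨V2, hV2⟩ := hiter_m (2 * n) 1
  set W : S := Tm^[n] (m (φ (A % E))) - (Tm^[2 * n] (m 1) + m (φ (B % E))) with hWdef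
  have hdegW : ∀ k : ℕ, P.coeff W k ≠ 0 → (k : WithBot ℕ) < P.degree F := by
    intro k hk
    have hcoeff : P.coeff W k = P.coeff (m V1) k
        - (P.coeff (m V2) k + P.coeff (m (φ (B % E))) k) := by
      rw [hWdef, hV1, hV2, SkewPolyAux.coeff_sub, SkewPolyAux.coeff_add]
      rfl
    have hone : P.coeff (m V1) k ≠ 0 ∨ P.coeff (m V2) k ≠ 0 ∨
        P.coeff (m (φ (B % E))) k ≠ 0 := by
      by_contra hcon
      push_neg at hcon
      obtain ⟨h1, h2, h3⟩ := hcon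
      rw [hcoeff, h1, h2, h3] at hk
      simp at hk
    rcases hone with h | h | h
    · refine lt_of_le_of_lt ?_ ((hm V1).2)
      rw [SkewPolyAux.degree_eq]
      exact Finset.le_max (Finsupp.mem_support_iff.mpr h)
    · refine lt_of_le_of_lt ?_ ((hm V2).2)
      rw [SkewPolyAux.degree_eq]
      exact Finset.le_max (Finsupp.mem_support_iff.mpr h)
    · refine lt_of_le_of_lt ?_ ((hm (φ (B % E))).2)
      rw [SkewPolyAux.degree_eq]
      exact Finset.le_max (Finsupp.mem_support_iff.mpr h)
  have hW0 : W = 0 := by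
    by_contra hW0
    have hQF : (Qa - P.tau ^ n * φ (A / E) + φ (B / E) - Qb - Qc) * F ≠ 0 := by
      rw [← hsub]; exact hW0
    have hle := SkewPolyAux.degree_le_of_mul P hQF hFne
    rw [← hsub] at hle
    have hcW : P.coeff W ≠ 0 := fun h => hW0 (SkewPolyAux.eq_zero_of_coeff_eq_zero P h)
    have hne : (P.coeff W).support.Nonempty := Finsupp.support_nonempty_iff.mpr hcW
    have hmax := hdegW ((P.coeff W).support.max' hne)
      (Finsupp.mem_support_iff.mp (Finset.max'_mem _ _))
    have hdW : P.degree W = ↑((P.coeff W).support.max' hne) := by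
      rw [SkewPolyAux.degree_eq]; exact (Finset.coe_max' hne).symm
    rw [hdW] at hle
    exact absurd (lt_of_le_of_lt hle hmax) (lt_irrefl _)
  exact sub_eq_zero.mp hW0
end
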